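/- Let ν, μ, λ ∈ ℝ and k ∈ ℤ∖{0} with δ := (k+λ)² + μ² − ν² < 0, set γ := √(−δ) and E := (1/(2iγ(λ+k−iγ))) [[λ+k−iγ, ν−μ], [−(ν+μ), −(λ+k−iγ)]]. Let A = (A⁺, A⁻), Ã = (Ã⁺, Ã⁻) ∈ ℂ² and let f = (f⁺,f⁻), g = (g⁺,g⁻) : (0,∞) → ℂ² satisfy lim_{r→0⁺} r^{−1/2} | f(r) − E·(A⁺ r^{iγ}, A⁻ r^{−iγ}) | = 0 and lim_{r→0⁺} r^{−1/2} | g(r) − E·(Ã⁺ r^{iγ}, Ã⁻ r^{−iγ}) | = 0. Then lim_{r→0⁺} [ f⁺(r) conj(g⁻(r)) − f⁻(r) conj(g⁺(r)) ] = (EA)₁ conj((EÃ)₂) − (EA)₂ conj((EÃ)₁), where EA and EÃ denote the matrix-vector products E·(A⁺,A⁻) and E·(Ã⁺,Ã⁻). -/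

import Mathlib

set_option maxHeartbeats 1000000
open MeasureTheory Real Filter
noncomputable section

def matE (ν μ lam γ : ℝ) (k : ℤ) : Matrix (Fin 2) (Fin 2) ℂ :=
  (1 / (2 * Complex.I * (γ : ℂ) * (((lam + (k : ℝ) : ℝ) : ℂ) - Complex.I * (γ : ℂ)))) •
    !![((lam + (k : ℝ) : ℝ) : ℂ) - Complex.I * (γ : ℂ), ((ν - μ : ℝ) : ℂ);
       -((ν + μ : ℝ) : ℂ), -(((lam + (k : ℝ) : ℝ) : ℂ) - Complex.I * (γ : ℂ))]

lemma mulVec0 (ν μ lam γ : ℝ) (k : ℤ) (x y : ℂ) :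
    (matE ν μ lam γ k).mulVec ![x, y] 0 =
    (1 / (2 * Complex.I * (γ : ℂ) * (((lam + (k : ℝ) : ℝ) : ℂ) - Complex.I * (γ : ℂ)))) *
      ((((lam + (k : ℝ) : ℝ) : ℂ) - Complex.I * (γ : ℂ)) * x + ((ν - μ : ℝ) : ℂ) * y) := by
  simp [matE, Matrix.mulVec, dotProduct, Fin.sum_univ_two]; ring

lemma mulVec1 (ν μ lam γ : ℝ) (k : ℤ) (x y : ℂ) :
    (matE ν μ lam γ k).mulVec ![x, y] 1 =
    (1 / (2 * Complex.I * (γ : ℂ) * (((lam + (k : ℝ) : ℝ) : ℂ) - Complex.I * (γ : ℂ)))) *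
      (-((ν + μ : ℝ) : ℂ) * x - (((lam + (k : ℝ) : ℝ) : ℂ) - Complex.I * (γ : ℂ)) * y) := by
  simp [matE, Matrix.mulVec, dotProduct, Fin.sum_univ_two]; ring

lemma scalar_id (a e b d Ap Am Cp Cm u c ce : ℂ) (hu : u ≠ 0) (hbd : b * d = a * e) :
    (c*(a*(Ap*u) + b*(Am*u⁻¹))) * (ce*(-d*(Cp*u⁻¹) - e*(Cm*u)))
      - (c*(-d*(Ap*u) - a*(Am*u⁻¹))) * (ce*(e*(Cp*u⁻¹) + b*(Cm*u)))
    = (c*(a*Ap + b*Am)) * (ce*(-d*Cp - e*Cm))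
      - (c*(-d*Ap - a*Am)) * (ce*(e*Cp + b*Cm)) := by
  field_simp
  linear_combination (c * ce * (u^2-1) * (Ap * Cm * u^2 + Am * Cp)) * hbd

lemma key (ν μ lam γ : ℝ) (k : ℤ)
    (hγ2 : ((γ:ℂ))^2 = (ν:ℂ)^2 - (μ:ℂ)^2 - (((lam + (k:ℝ) : ℝ)):ℂ)^2)
    (Ap Am Bp Bm u : ℂ) (hu : u ≠ 0) (huc : (starRingEnd ℂ) u = u⁻¹) :
    (matE ν μ lam γ k).mulVec ![Ap*u, Am*u⁻¹] 0 *
      (starRingEnd ℂ) ((matE ν μ lam γ k).mulVec ![Bp*u, Bm*u⁻¹] 1) -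
    (matE ν μ lam γ k).mulVec ![Ap*u, Am*u⁻¹] 1 *
      (starRingEnd ℂ) ((matE ν μ lam γ k).mulVec ![Bp*u, Bm*u⁻¹] 0) =
    (matE ν μ lam γ k).mulVec ![Ap, Am] 0 *
      (starRingEnd ℂ) ((matE ν μ lam γ k).mulVec ![Bp, Bm] 1) -
    (matE ν μ lam γ k).mulVec ![Ap, Am] 1 *
      (starRingEnd ℂ) ((matE ν μ lam γ k).mulVec ![Bp, Bm] 0) := by
  set A : ℂ := (((lam + (k:ℝ) : ℝ)):ℂ) with hA
  rw [mulVec0, mulVec0, mulVec0, mulVec0, mulVec1, mulVec1, mulVec1, mulVec1]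
  simp only [map_mul, map_add, map_sub, map_div₀, map_one, map_neg, map_ofNat,
    Complex.conj_I, Complex.conj_ofReal, map_inv₀, huc, inv_inv]
  have hbd : ((ν:ℂ)-μ) * ((ν:ℂ)+μ) = (A - Complex.I*γ) * (A + Complex.I*γ) := by
    linear_combination (γ:ℂ)^2 * Complex.I_sq - hγ2
  have h1 : ((ν - μ : ℝ):ℂ) = (ν:ℂ)-μ := by push_cast; ring
  have h2 : ((ν + μ : ℝ):ℂ) = (ν:ℂ)+μ := by push_cast; ring
  rw [h1, h2]
  linear_combination scalar_id (A - Complex.I*γ) (A + Complex.I*γ) ((ν:ℂ)-μ) ((ν:ℂ)+μ)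
    Ap Am ((starRingEnd ℂ) Bp) ((starRingEnd ℂ) Bm) u
    (1/(2*Complex.I*γ*(A - Complex.I*γ))) (1/(2*(-Complex.I)*γ*(A + Complex.I*γ))) hu hbd

lemma err_aux (p q : ℝ → ℂ)
    (h : Tendsto (fun r : ℝ => Real.sqrt (norm (p r) ^ 2 + norm (q r) ^ 2) *
      r ^ (-(1 / 2 : ℝ))) (nhdsWithin 0 (Set.Ioi 0)) (nhds 0)) :
    Tendsto p (nhdsWithin 0 (Set.Ioi 0)) (nhds 0) := by
  rw [tendsto_zero_iff_norm_tendsto_zero]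
  have hev : ∀ᶠ r in nhdsWithin (0:ℝ) (Set.Ioi 0), ‖p r‖ ≤
      Real.sqrt (norm (p r) ^ 2 + norm (q r) ^ 2) * r ^ (-(1 / 2 : ℝ)) := by
    filter_upwards [Ioo_mem_nhdsGT_of_mem (Set.left_mem_Ico.mpr one_pos)] with r hr
    have h1 : ‖p r‖ ≤ Real.sqrt (norm (p r) ^ 2 + norm (q r) ^ 2) := by
      calc norm (p r) = Real.sqrt (norm (p r) ^ 2) :=
            (Real.sqrt_sq (norm_nonneg (p r))).symm
        _ ≤ Real.sqrt (norm (p r) ^ 2 + norm (q r) ^ 2) :=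
            Real.sqrt_le_sqrt (le_add_of_nonneg_right (sq_nonneg _))
    have h2 : (1:ℝ) ≤ r ^ (-(1 / 2 : ℝ)) :=
      Real.one_le_rpow_of_pos_of_le_one_of_nonpos hr.1 hr.2.le (by norm_num)
    exact h1.trans (le_mul_of_one_le_right (Real.sqrt_nonneg _) h2)
  exact squeeze_zero' (Filter.Eventually.of_forall fun r => norm_nonneg _) hev h

lemma err_aux' (p q : ℝ → ℂ)
    (h : Tendsto (fun r : ℝ => Real.sqrt (norm (p r) ^ 2 + norm (q r) ^ 2) *
      r ^ (-(1 / 2 : ℝ))) (nhdsWithin 0 (Set.Ioi 0)) (nhds 0)) :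
    Tendsto q (nhdsWithin 0 (Set.Ioi 0)) (nhds 0) := by
  apply err_aux q p
  simpa [add_comm] using h

lemma bounded_model (M : Matrix (Fin 2) (Fin 2) ℂ) (Ap Am : ℂ) (i : Fin 2) :
    ∃ C : ℝ, ∀ u v : ℂ, norm u = 1 → norm v = 1 →
      norm (M.mulVec ![Ap * u, Am * v] i) ≤ C := by
  refine ⟨norm (M i 0) * norm Ap + norm (M i 1) * norm Am, ?_⟩
  intro u v hu hv
  have he : M.mulVec ![Ap * u, Am * v] i = M i 0 * (Ap * u) + M i 1 * (Am * v) := by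
    simp [Matrix.mulVec, dotProduct, Fin.sum_univ_two]
  rw [he]
  calc norm (M i 0 * (Ap * u) + M i 1 * (Am * v))
      ≤ norm (M i 0 * (Ap * u)) + norm (M i 1 * (Am * v)) := norm_add_le _ _
    _ = norm (M i 0) * norm Ap + norm (M i 1) * norm Am := by
        simp [map_mul, hu, hv]

lemma mul_zero_of_bounded {l : Filter ℝ} {f g : ℝ → ℂ} {C : ℝ}
    (hf : Tendsto f l (nhds 0)) (hg : ∀ r, norm (g r) ≤ C) :
    Tendsto (fun r => f r * g r) l (nhds 0) := by
  rw [tendsto_zero_iff_norm_tendsto_zero] at hf ⊢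
  refine squeeze_zero (fun r => norm_nonneg _) (fun r => ?_) (by simpa using hf.mul_const C)
  rw [norm_mul]
  exact mul_le_mul_of_nonneg_left (by simpa using hg r) (norm_nonneg _)

lemma bounded_mul_zero {l : Filter ℝ} {f g : ℝ → ℂ} {C : ℝ}
    (hf : ∀ r, norm (f r) ≤ C) (hg : Tendsto g l (nhds 0)) :
    Tendsto (fun r => f r * g r) l (nhds 0) := by
  have := mul_zero_of_bounded hg hf
  simpa [mul_comm] using this

/-- boundary limit of the Wronskian-type expression in the supercritical
case δ < 0, where r^{±iγ} := exp(±iγ log r). -/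
theorem wronskian_limit_supercritical (ν μ lam : ℝ) (k : ℤ) (hk : k ≠ 0)
    (hδ : (((k : ℝ) + lam) ^ 2 + μ ^ 2 - ν ^ 2) < 0) (γ : ℝ)
    (hγ : γ = Real.sqrt (-(((k : ℝ) + lam) ^ 2 + μ ^ 2 - ν ^ 2)))
    (Ap Am Bp Bm : ℂ) (fp fm gp gm : ℝ → ℂ)
    (hf : Tendsto (fun r : ℝ =>
        Real.sqrt
          (norm (fp r -
              (matE ν μ lam γ k).mulVec
                ![Ap * Complex.exp (Complex.I * γ * Real.log r),
                  Am * Complex.exp (-(Complex.I * γ * Real.log r))] 0) ^ 2 +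
            norm (fm r -
              (matE ν μ lam γ k).mulVec
                ![Ap * Complex.exp (Complex.I * γ * Real.log r),
                  Am * Complex.exp (-(Complex.I * γ * Real.log r))] 1) ^ 2) *
          r ^ (-(1 / 2 : ℝ))) (nhdsWithin 0 (Set.Ioi 0)) (nhds 0))
    (hg : Tendsto (fun r : ℝ =>
        Real.sqrt
          (norm (gp r -
              (matE ν μ lam γ k).mulVec
                ![Bp * Complex.exp (Complex.I * γ * Real.log r),
                  Bm * Complex.exp (-(Complex.I * γ * Real.log r))] 0) ^ 2 +
            norm (gm r -
              (matE ν μ lam γ k).mulVec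
                ![Bp * Complex.exp (Complex.I * γ * Real.log r),
                  Bm * Complex.exp (-(Complex.I * γ * Real.log r))] 1) ^ 2) *
          r ^ (-(1 / 2 : ℝ))) (nhdsWithin 0 (Set.Ioi 0)) (nhds 0)) :
    Tendsto (fun r : ℝ => fp r * (starRingEnd ℂ) (gm r) - fm r * (starRingEnd ℂ) (gp r))
      (nhdsWithin 0 (Set.Ioi 0))
      (nhds ((matE ν μ lam γ k).mulVec ![Ap, Am] 0 *
          (starRingEnd ℂ) ((matE ν μ lam γ k).mulVec ![Bp, Bm] 1) -
        (matE ν μ lam γ k).mulVec ![Ap, Am] 1 *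
          (starRingEnd ℂ) ((matE ν μ lam γ k).mulVec ![Bp, Bm] 0))) := by
  -- basic facts about γ
  have hγsq : γ ^ 2 = ν ^ 2 - μ ^ 2 - ((k:ℝ) + lam) ^ 2 := by
    rw [hγ, Real.sq_sqrt (by linarith)]; ring
  have hγ2 : ((γ:ℂ))^2 = (ν:ℂ)^2 - (μ:ℂ)^2 - (((lam + (k:ℝ) : ℝ)):ℂ)^2 := by
    have h := congrArg (fun x : ℝ => (x : ℂ)) hγsq
    push_cast at h ⊢
    linear_combination h
  -- notation
  set M := matE ν μ lam γ k with hM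
  set u : ℝ → ℂ := fun r => Complex.exp (Complex.I * γ * Real.log r) with hu
  set v : ℝ → ℂ := fun r => Complex.exp (-(Complex.I * γ * Real.log r)) with hv
  set F : ℝ → Fin 2 → ℂ := fun r => M.mulVec ![Ap * u r, Am * v r] with hF
  set G : ℝ → Fin 2 → ℂ := fun r => M.mulVec ![Bp * u r, Bm * v r] with hG
  set L : ℂ := M.mulVec ![Ap, Am] 0 * (starRingEnd ℂ) (M.mulVec ![Bp, Bm] 1) -
      M.mulVec ![Ap, Am] 1 * (starRingEnd ℂ) (M.mulVec ![Bp, Bm] 0) with hL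
  -- error terms go to zero
  have he0 : Tendsto (fun r => fp r - F r 0) (nhdsWithin 0 (Set.Ioi 0)) (nhds 0) :=
    err_aux _ (fun r => fm r - F r 1) hf
  have he1 : Tendsto (fun r => fm r - F r 1) (nhdsWithin 0 (Set.Ioi 0)) (nhds 0) :=
    err_aux' (fun r => fp r - F r 0) _ hf
  have hd0 : Tendsto (fun r => gp r - G r 0) (nhdsWithin 0 (Set.Ioi 0)) (nhds 0) :=
    err_aux _ (fun r => gm r - G r 1) hg
  have hd1 : Tendsto (fun r => gm r - G r 1) (nhdsWithin 0 (Set.Ioi 0)) (nhds 0) :=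
    err_aux' (fun r => gp r - G r 0) _ hg
  have hd0c : Tendsto (fun r => (starRingEnd ℂ) (gp r - G r 0))
      (nhdsWithin 0 (Set.Ioi 0)) (nhds 0) := by
    have := (Complex.continuous_conj.tendsto 0).comp hd0
    simpa [Function.comp_def, map_sub] using this
  have hd1c : Tendsto (fun r => (starRingEnd ℂ) (gm r - G r 1))
      (nhdsWithin 0 (Set.Ioi 0)) (nhds 0) := by
    have := (Complex.continuous_conj.tendsto 0).comp hd1
    simpa [Function.comp_def, map_sub] using this
  -- |u r| = |v r| = 1
  have habs_u : ∀ r : ℝ, norm (u r) = 1 := by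
    intro r
    rw [hu]
    simp [Complex.norm_exp, Complex.mul_re, Complex.mul_im]
  have habs_v : ∀ r : ℝ, norm (v r) = 1 := by
    intro r
    rw [hv]
    simp [Complex.norm_exp, Complex.mul_re, Complex.mul_im]
  -- bounds on model solutions
  obtain ⟨C0, hC0⟩ := bounded_model M Ap Am 0
  obtain ⟨C1, hC1⟩ := bounded_model M Ap Am 1
  obtain ⟨D0, hD0⟩ := bounded_model M Bp Bm 0
  obtain ⟨D1, hD1⟩ := bounded_model M Bp Bm 1
  have hFb0 : ∀ r, norm (F r 0) ≤ C0 := fun r => hC0 _ _ (habs_u r) (habs_v r)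
  have hFb1 : ∀ r, norm (F r 1) ≤ C1 := fun r => hC1 _ _ (habs_u r) (habs_v r)
  have hGb0 : ∀ r, norm ((starRingEnd ℂ) (G r 0)) ≤ D0 := fun r => by
    rw [Complex.norm_conj]; exact hD0 _ _ (habs_u r) (habs_v r)
  have hGb1 : ∀ r, norm ((starRingEnd ℂ) (G r 1)) ≤ D1 := fun r => by
    rw [Complex.norm_conj]; exact hD1 _ _ (habs_u r) (habs_v r)
  -- the Wronskian of model solutions is constant
  have hid : ∀ r : ℝ, F r 0 * (starRingEnd ℂ) (G r 1) - F r 1 * (starRingEnd ℂ) (G r 0) = L := by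
    intro r
    have hvinv : v r = (u r)⁻¹ := by rw [hu, hv]; exact Complex.exp_neg _
    have hunz : u r ≠ 0 := Complex.exp_ne_zero _
    have huc : (starRingEnd ℂ) (u r) = (u r)⁻¹ := by
      rw [hu, ← Complex.exp_conj, ← Complex.exp_neg]
      congr 1
      simp [map_mul, Complex.conj_I, Complex.conj_ofReal]
    have := key ν μ lam γ k hγ2 Ap Am Bp Bm (u r) hunz huc
    rw [hF, hG, hL, hM]
    simp only [hvinv]
    exact this
  -- reduce to showing the difference tends to zero
  rw [← tendsto_sub_nhds_zero_iff]
  have hrepr : (fun r => fp r * (starRingEnd ℂ) (gm r) - fm r * (starRingEnd ℂ) (gp r) - L) =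
      fun r => ((fp r - F r 0) * (starRingEnd ℂ) (G r 1) +
        (fp r - F r 0) * (starRingEnd ℂ) (gm r - G r 1) +
        F r 0 * (starRingEnd ℂ) (gm r - G r 1)) -
        ((fm r - F r 1) * (starRingEnd ℂ) (G r 0) +
        (fm r - F r 1) * (starRingEnd ℂ) (gp r - G r 0) +
        F r 1 * (starRingEnd ℂ) (gp r - G r 0)) := by
    funext r
    simp only [map_sub]
    linear_combination hid r
  rw [hrepr]
  have t1 := mul_zero_of_bounded he0 hGb1
  have t2 : Tendsto (fun r => (fp r - F r 0) * (starRingEnd ℂ) (gm r - G r 1))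
      (nhdsWithin 0 (Set.Ioi 0)) (nhds 0) := by simpa using he0.mul hd1c
  have t3 := bounded_mul_zero hFb0 hd1c
  have t4 := mul_zero_of_bounded he1 hGb0
  have t5 : Tendsto (fun r => (fm r - F r 1) * (starRingEnd ℂ) (gp r - G r 0))
      (nhdsWithin 0 (Set.Ioi 0)) (nhds 0) := by simpa using he1.mul hd0c
  have t6 := bounded_mul_zero hFb1 hd0c
  have := ((t1.add t2).add t3).sub ((t4.add t5).add t6)
  simpa using this
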